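/- Let Ω ⊂ ℝⁿ be a bounded open set containing the ball B_R(0) for some R > 0, and let G : Ω×Ω → [0,∞) be measurable with m := inf_{x∈Ω} ∫_{B_R(0)} G(x,y) dy > 0 and M := sup_{x∈Ω} ∫_Ω G(x,y) dy < ∞. Let h : [0,∞) → (0,∞) be nondecreasing, and let a > 0, σ₂ > 0 and λ > 0 satisfy a/(m·h(a)) ≤ λ ≤ σ₂/(M·h(a)). Define v : Ω → ℝ by v = a on B_R(0) and v = 0 on Ω∖B_R(0), and define v₁(x) = λ ∫_Ω G(x,y) h(v(y)) dy. Then 0 ≤ v ≤ v₁ ≤ σ₂ on Ω. -/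

import Mathlib

open Real Set MeasureTheory
open scoped ENNReal

/-- Section 3 claim: for `λ` in the window `[a/(m h(a)), σ₂/(M h(a))]`,
the Green-operator image `v₁` of the plateau function `v = a·χ_{B_R(0)}`
satisfies `0 ≤ v ≤ v₁ ≤ σ₂` on `Ω`. -/
theorem plateau_subsolution_sandwich
    (n : ℕ) (hn : 1 ≤ n)
    (Ω : Set (EuclideanSpace ℝ (Fin n))) (hΩo : IsOpen Ω)
    (hΩb : Bornology.IsBounded Ω)
    (R : ℝ) (hR : 0 < R) (hball : Metric.ball (0 : EuclideanSpace ℝ (Fin n)) R ⊆ Ω)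
    (G : EuclideanSpace ℝ (Fin n) → EuclideanSpace ℝ (Fin n) → ℝ)
    (hGmeas : Measurable (Function.uncurry G))
    (hGnonneg : ∀ x ∈ Ω, ∀ y ∈ Ω, 0 ≤ G x y)
    (m M : ℝ) (hm : 0 < m)
    (hminf : ∀ x ∈ Ω, ENNReal.ofReal m ≤
      ∫⁻ y in Metric.ball (0 : EuclideanSpace ℝ (Fin n)) R,
        ENNReal.ofReal (G x y) ∂volume)
    (hMsup : ∀ x ∈ Ω,
      (∫⁻ y in Ω, ENNReal.ofReal (G x y) ∂volume) ≤ ENNReal.ofReal M)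
    (h : ℝ → ℝ) (hpos : ∀ t : ℝ, 0 ≤ t → 0 < h t)
    (hmono : MonotoneOn h (Set.Ici (0 : ℝ)))
    (a σ₂ lam : ℝ) (ha : 0 < a) (hσ₂ : 0 < σ₂) (hlam : 0 < lam)
    (hlow : a / (m * h a) ≤ lam) (hhigh : lam ≤ σ₂ / (M * h a))
    (v : EuclideanSpace ℝ (Fin n) → ℝ)
    (hv : v = (Metric.ball (0 : EuclideanSpace ℝ (Fin n)) R).indicator fun _ => a)
    (v₁ : EuclideanSpace ℝ (Fin n) → ℝ)
    (hv₁ : ∀ x, v₁ x = lam * ∫ y in Ω, G x y * h (v y) ∂volume) :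
    ∀ x ∈ Ω, 0 ≤ v x ∧ v x ≤ v₁ x ∧ v₁ x ≤ σ₂ := by
  classical

  set B := Metric.ball (0 : EuclideanSpace ℝ (Fin n)) R with hB
  have h0mem : (0 : EuclideanSpace ℝ (Fin n)) ∈ B := by
    simp [hB, hR]
  have hha : 0 < h a := hpos a ha.le
  have hvnonneg : ∀ y, 0 ≤ v y := by
    intro y; rw [hv, Set.indicator_apply]; split_ifs <;> simp [ha.le]
  have hvle : ∀ y, v y ≤ a := by
    intro y; rw [hv, Set.indicator_apply]; split_ifs <;> simp [ha.le]
  have hhvle : ∀ y, h (v y) ≤ h a :=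
    fun y => hmono (hvnonneg y) (Set.mem_Ici.mpr ha.le) (hvle y)
  have hmM : m ≤ M := by
    have h1 := hminf 0 (hball h0mem)
    have h2 := hMsup 0 (hball h0mem)
    have h3 : (∫⁻ y in B, ENNReal.ofReal (G 0 y) ∂volume)
        ≤ ∫⁻ y in Ω, ENNReal.ofReal (G 0 y) ∂volume := lintegral_mono_set hball
    by_contra hcon
    push_neg at hcon
    exact absurd (h1.trans (h3.trans h2))
      (not_le.mpr ((ENNReal.ofReal_lt_ofReal_iff hm).mpr hcon))
  have hMpos : 0 < M := lt_of_lt_of_le hm hmM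
  have hhv : (fun y => h (v y)) = fun y => if y ∈ B then h a else h 0 := by
    funext y; rw [hv]; by_cases hy : y ∈ B <;> simp [hy]
  have hhvmeas : Measurable fun y => h (v y) := by
    rw [hhv]; exact Measurable.ite measurableSet_ball measurable_const measurable_const
  intro x hx
  have hGx : Measurable fun y => G x y := hGmeas.comp measurable_prodMk_left
  set I := ∫⁻ y in Ω, ENNReal.ofReal (G x y * h (v y)) ∂volume with hI
  have pw : ∀ y, ENNReal.ofReal (G x y * h (v y))
      = ENNReal.ofReal (G x y) * ENNReal.ofReal (h (v y)) :=
    fun y => ENNReal.ofReal_mul' (hpos _ (hvnonneg y)).le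
  have hup : I ≤ ENNReal.ofReal M * ENNReal.ofReal (h a) := by
    calc I ≤ ∫⁻ y in Ω, ENNReal.ofReal (G x y) * ENNReal.ofReal (h a) ∂volume := by
          refine lintegral_mono fun y => ?_
          rw [pw y]
          exact mul_le_mul_right (ENNReal.ofReal_le_ofReal (hhvle y)) _
      _ = (∫⁻ y in Ω, ENNReal.ofReal (G x y) ∂volume) * ENNReal.ofReal (h a) :=
          lintegral_mul_const _ (hGx.ennreal_ofReal)
      _ ≤ _ := mul_le_mul_left (hMsup x hx) _
  have hlo : ENNReal.ofReal m * ENNReal.ofReal (h a) ≤ I := by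
    have hBsub : (∫⁻ y in B, ENNReal.ofReal (G x y * h (v y)) ∂volume) ≤ I :=
      lintegral_mono_set hball
    have heq : (∫⁻ y in B, ENNReal.ofReal (G x y * h (v y)) ∂volume)
        = (∫⁻ y in B, ENNReal.ofReal (G x y) ∂volume) * ENNReal.ofReal (h a) := by
      calc (∫⁻ y in B, ENNReal.ofReal (G x y * h (v y)) ∂volume)
          = ∫⁻ y in B, ENNReal.ofReal (G x y) * ENNReal.ofReal (h a) ∂volume := by
            refine setLIntegral_congr_fun measurableSet_ball (fun y hy => ?_)
            have hva : v y = a := by rw [hv]; simp [hy]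
            rw [hva, ENNReal.ofReal_mul' hha.le]
        _ = _ := lintegral_mul_const _ hGx.ennreal_ofReal
    refine le_trans ?_ hBsub
    rw [heq]
    exact mul_le_mul_left (hminf x hx) _
  have hItop : I ≠ ⊤ := by
    refine ne_top_of_le_ne_top ?_ hup
    exact (ENNReal.mul_lt_top ENNReal.ofReal_lt_top ENNReal.ofReal_lt_top).ne
  have hint : (∫ y in Ω, G x y * h (v y) ∂volume) = I.toReal := by
    rw [integral_eq_lintegral_of_nonneg_ae]
    · exact ae_restrict_of_forall_mem hΩo.measurableSet fun y hy =>
        mul_nonneg (hGnonneg x hx y hy) (hpos _ (hvnonneg y)).le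
    · exact (hGx.mul hhvmeas).aestronglyMeasurable
  have hJlow : m * h a ≤ I.toReal := by
    have := ENNReal.toReal_mono hItop hlo
    rwa [ENNReal.toReal_mul, ENNReal.toReal_ofReal hm.le, ENNReal.toReal_ofReal hha.le] at this
  have hJup : I.toReal ≤ M * h a := by
    have := ENNReal.toReal_mono
      (ENNReal.mul_lt_top ENNReal.ofReal_lt_top ENNReal.ofReal_lt_top).ne hup
    rwa [ENNReal.toReal_mul, ENNReal.toReal_ofReal hMpos.le, ENNReal.toReal_ofReal hha.le] at this
  have h1 : a ≤ lam * (m * h a) := (div_le_iff₀ (mul_pos hm hha)).mp hlow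
  have h2 : lam * (M * h a) ≤ σ₂ := (le_div_iff₀ (mul_pos hMpos hha)).mp hhigh
  refine ⟨hvnonneg x, ?_, ?_⟩
  · rw [hv₁ x, hint]
    calc v x ≤ a := hvle x
      _ ≤ lam * (m * h a) := h1
      _ ≤ lam * I.toReal := mul_le_mul_of_nonneg_left hJlow hlam.le
  · rw [hv₁ x, hint]
    calc lam * I.toReal ≤ lam * (M * h a) := mul_le_mul_of_nonneg_left hJup hlam.le
      _ ≤ σ₂ := h2
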